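/- arXiv:math/0601693 — 2 statements merged into one kernel-verified Lean document; each statement's English description precedes it below -/
import Mathlib

section
/- For a non-attacking filling σ of μ, a triple (u,v,w) is a co-inversion triple (i.e., χ_{uv} + χ_{vw} − χ_{uw} = 0) if and only if the three distinct values satisfy σ̂(u) < σ̂(v) < σ̂(w), or σ̂(v) < σ̂(w) < σ̂(u), or σ̂(w) < σ̂(u) < σ̂(v). -/
open Finset

noncomputable section
attribute [local instance] Classical.propDecidable

/-- `u` lies in the column diagram of the composition `μ` (columns `1,…,n`). -/
def dgIn (n : ℕ) (μ : ℕ → ℕ) (u : ℕ × ℕ) : Prop :=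
  1 ≤ u.1 ∧ u.1 ≤ n ∧ 1 ≤ u.2 ∧ u.2 ≤ μ u.1

/-- `u` lies in the augmented diagram of `μ` (row `0` added). -/
def augIn (n : ℕ) (μ : ℕ → ℕ) (u : ℕ × ℕ) : Prop :=
  1 ≤ u.1 ∧ u.1 ≤ n ∧ u.2 ≤ μ u.1

/-- The column diagram of `μ` as a finite set. -/
def dgF (n : ℕ) (μ : ℕ → ℕ) : Finset (ℕ × ℕ) :=
  (Finset.Icc 1 n).biUnion (fun i => (Finset.Icc 1 (μ i)).image (fun j => (i, j)))

/-- The augmented diagram of `μ` as a finite set. -/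
def augF (n : ℕ) (μ : ℕ → ℕ) : Finset (ℕ × ℕ) :=
  (Finset.Icc 1 n).biUnion (fun i => (Finset.Icc 0 (μ i)).image (fun j => (i, j)))

/-- The box directly below `u`. -/
def dbox (u : ℕ × ℕ) : ℕ × ℕ := (u.1, u.2 - 1)

/-- `v` belongs to the arm of `u` (left arm or right arm). -/
def armIn (n : ℕ) (μ : ℕ → ℕ) (u v : ℕ × ℕ) : Prop :=
  (dgIn n μ v ∧ v.2 = u.2 ∧ v.1 < u.1 ∧ μ v.1 ≤ μ u.1) ∨
  (augIn n μ v ∧ v.2 + 1 = u.2 ∧ u.1 < v.1 ∧ μ v.1 < μ u.1)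

/-- The arm of `u` as a finite set. -/
def armF (n : ℕ) (μ : ℕ → ℕ) (u : ℕ × ℕ) : Finset (ℕ × ℕ) :=
  (augF n μ).filter (fun v => armIn n μ u v)

/-- The leg length `l(u) = μ_i - j`. -/
def legLen (μ : ℕ → ℕ) (u : ℕ × ℕ) : ℕ := μ u.1 - u.2

/-- The arm length `a(u) = |arm(u)|`. -/
def armLen (n : ℕ) (μ : ℕ → ℕ) (u : ℕ × ℕ) : ℕ := (armF n μ u).card

/-- Two distinct boxes attack each other: same row, or consecutive rows with
the lower box strictly to the right. -/
def attacks (u v : ℕ × ℕ) : Prop :=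
  u ≠ v ∧ (u.2 = v.2 ∨ (u.2 = v.2 + 1 ∧ u.1 < v.1) ∨ (v.2 = u.2 + 1 ∧ v.1 < u.1))

/-- Reading order: rows top to bottom, right to left within a row. -/
def rlt (u v : ℕ × ℕ) : Prop := v.2 < u.2 ∨ (u.2 = v.2 ∧ v.1 < u.1)

/-- The augmented filling: value `i` in the row-0 box `(i,0)`. -/
def augOf (σ : ℕ × ℕ → ℕ) : ℕ × ℕ → ℕ := fun u => if u.2 = 0 then u.1 else σ u

/-- The (augmented) filling is non-attacking. -/
def NonAttacking (n : ℕ) (μ : ℕ → ℕ) (σh : ℕ × ℕ → ℕ) : Prop :=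
  ∀ u v : ℕ × ℕ, augIn n μ u → augIn n μ v → attacks u v → σh u ≠ σh v

/-- The set of inversions of an augmented filling: attacking pairs,
earlier box (in reading order) having the larger entry. -/
def invF (n : ℕ) (μ : ℕ → ℕ) (σh : ℕ × ℕ → ℕ) : Finset ((ℕ × ℕ) × (ℕ × ℕ)) :=
  ((augF n μ) ×ˢ (augF n μ)).filter
    (fun p => attacks p.1 p.2 ∧ rlt p.1 p.2 ∧ σh p.2 < σh p.1)

/-- The descent set of an augmented filling. -/
def desF (n : ℕ) (μ : ℕ → ℕ) (σh : ℕ × ℕ → ℕ) : Finset (ℕ × ℕ) :=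
  (dgF n μ).filter (fun u => σh (dbox u) < σh u)

/-- maj = sum of `l(u)+1` over descents. -/
def majStat (n : ℕ) (μ : ℕ → ℕ) (σh : ℕ × ℕ → ℕ) : ℕ :=
  ∑ u ∈ desF n μ σh, (legLen μ u + 1)

/-- `χ_{xy} = 1` iff the earlier box in reading order carries the larger entry. -/
def chi (σh : ℕ × ℕ → ℕ) (x y : ℕ × ℕ) : ℕ :=
  if (rlt x y ∧ σh y < σh x) ∨ (rlt y x ∧ σh x < σh y) then 1 else 0

/-- Triples `(u, v, d(u))`, encoded by the pair `(u, v)` with `v ∈ arm(u)`. -/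
def triplesF (n : ℕ) (μ : ℕ → ℕ) : Finset ((ℕ × ℕ) × (ℕ × ℕ)) :=
  ((dgF n μ) ×ˢ (augF n μ)).filter (fun p => armIn n μ p.1 p.2)

/-- Inversion triples: `χ_{uv} + χ_{vw} - χ_{uw} = 1` where `w = d(u)`. -/
def invTriplesF (n : ℕ) (μ : ℕ → ℕ) (σh : ℕ × ℕ → ℕ) : Finset ((ℕ × ℕ) × (ℕ × ℕ)) :=
  (triplesF n μ).filter
    (fun p => chi σh p.1 p.2 + chi σh p.2 (dbox p.1) = chi σh p.1 (dbox p.1) + 1)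

/-- Co-inversion triples: `χ_{uv} + χ_{vw} - χ_{uw} = 0` where `w = d(u)`. -/
def coinvTriplesF (n : ℕ) (μ : ℕ → ℕ) (σh : ℕ × ℕ → ℕ) : Finset ((ℕ × ℕ) × (ℕ × ℕ)) :=
  (triplesF n μ).filter
    (fun p => chi σh p.1 p.2 + chi σh p.2 (dbox p.1) = chi σh p.1 (dbox p.1))

/-- coinv = number of co-inversion triples. -/
def coinvStat (n : ℕ) (μ : ℕ → ℕ) (σh : ℕ × ℕ → ℕ) : ℕ := (coinvTriplesF n μ σh).card

/-- `σ` is a filling of `μ`, i.e. takes values in `[n]` on the diagram. -/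
def IsFilling (n : ℕ) (μ : ℕ → ℕ) (σ : ℕ × ℕ → ℕ) : Prop :=
  ∀ u : ℕ × ℕ, dgIn n μ u → 1 ≤ σ u ∧ σ u ≤ n


lemma mem_dgF_iff {n : ℕ} {μ : ℕ → ℕ} {u : ℕ × ℕ} : u ∈ dgF n μ ↔ dgIn n μ u := by
  simp only [dgF, dgIn, Finset.mem_biUnion, Finset.mem_image, Finset.mem_Icc]
  constructor
  · rintro ⟨i, hi, j, hj, rfl⟩; exact ⟨hi.1, hi.2, hj.1, hj.2⟩
  · rintro ⟨h1, h2, h3, h4⟩; exact ⟨u.1, ⟨h1, h2⟩, u.2, ⟨h3, h4⟩, rfl⟩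

lemma chi_of_rlt {σh : ℕ × ℕ → ℕ} {x y : ℕ × ℕ} (h : rlt x y) (h2 : ¬ rlt y x) :
    chi σh x y = if σh y < σh x then 1 else 0 := by
  simp [chi, h, h2]

/-- in a non-attacking filling, a triple `(u, v, w = d(u))` is a
co-inversion triple iff its (distinct) entries increase cyclically as stated. -/
theorem coinv_triple_iff (n : ℕ) (μ : ℕ → ℕ) (σ : ℕ × ℕ → ℕ)
    (hσ : IsFilling n μ σ) (hna : NonAttacking n μ (augOf σ))
    (p : (ℕ × ℕ) × (ℕ × ℕ)) (hp : p ∈ triplesF n μ) :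
    (chi (augOf σ) p.1 p.2 + chi (augOf σ) p.2 (dbox p.1)
        = chi (augOf σ) p.1 (dbox p.1)) ↔
      ((augOf σ p.1 < augOf σ p.2 ∧ augOf σ p.2 < augOf σ (dbox p.1)) ∨
       (augOf σ p.2 < augOf σ (dbox p.1) ∧ augOf σ (dbox p.1) < augOf σ p.1) ∨
       (augOf σ (dbox p.1) < augOf σ p.1 ∧ augOf σ p.1 < augOf σ p.2)) := by
  obtain ⟨hmem, harm⟩ := Finset.mem_filter.mp hp
  obtain ⟨hu, -⟩ := Finset.mem_product.mp hmem
  have hdu : dgIn n μ p.1 := mem_dgF_iff.mp hu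
  have hu2 : 1 ≤ p.1.2 := hdu.2.2.1
  have hw2 : (dbox p.1).2 + 1 = p.1.2 := by simp only [dbox]; omega
  have hw1 : (dbox p.1).1 = p.1.1 := rfl
  have haugu : augIn n μ p.1 := ⟨hdu.1, hdu.2.1, hdu.2.2.2⟩
  have haugw : augIn n μ (dbox p.1) := ⟨hdu.1, hdu.2.1, by have := hdu.2.2.2; simp only [dbox]; omega⟩
  have key : augIn n μ p.2 ∧ attacks p.1 p.2 ∧ attacks p.2 (dbox p.1) ∧
      rlt p.1 p.2 ∧ ¬ rlt p.2 p.1 ∧ rlt p.2 (dbox p.1) ∧ ¬ rlt (dbox p.1) p.2 := by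
    rcases harm with ⟨hdv, h1, h2, -⟩ | ⟨hav, h1, h2, -⟩
    · refine ⟨⟨hdv.1, hdv.2.1, hdv.2.2.2⟩, ⟨?_, Or.inl h1.symm⟩,
        ⟨?_, Or.inr (Or.inl ⟨by omega, by omega⟩)⟩, Or.inr ⟨h1.symm, h2⟩,
        ?_, Or.inl (by omega), ?_⟩
      · intro h; rw [h] at h2; omega
      · intro h; rw [← h] at hw2; omega
      · simp only [rlt, not_or]; omega
      · simp only [rlt, not_or]; omega
    · refine ⟨hav, ⟨?_, Or.inr (Or.inl ⟨by omega, h2⟩)⟩,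
        ⟨?_, Or.inl (by omega)⟩, Or.inl (by omega), ?_,
        Or.inr ⟨by omega, by omega⟩, ?_⟩
      · intro h; rw [h] at h1; omega
      · intro h; rw [h, hw1] at h2; omega
      · simp only [rlt, not_or]; omega
      · simp only [rlt, not_or]; omega
  obtain ⟨haugv, hatt1, hatt2, hr1, hr1n, hr2, hr2n⟩ := key
  have hr3 : rlt p.1 (dbox p.1) := Or.inl (by omega)
  have hr3n : ¬ rlt (dbox p.1) p.1 := by simp only [rlt, not_or]; omega
  have hne1 : augOf σ p.1 ≠ augOf σ p.2 := hna _ _ haugu haugv hatt1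
  have hne2 : augOf σ p.2 ≠ augOf σ (dbox p.1) := hna _ _ haugv haugw hatt2
  rw [chi_of_rlt hr1 hr1n, chi_of_rlt hr2 hr2n, chi_of_rlt hr3 hr3n]
  split_ifs <;> constructor <;> intro h <;> first | exact h.elim | trivial | omega
end
end

section
/- For any box u in the column diagram of μ, the leg and arm lengths are preserved by the cyclic shift: l(π(u)) = l(u) and a(π(u)) = a(u), where l and a on the left are computed in the diagram of π(μ). -/
open Finset

noncomputable section
attribute [local instance] Classical.propDecidable

/-- `π` on compositions: `π(μ) = (μ_n+1, μ_1, …, μ_{n-1})`. -/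
def piComp (n : ℕ) (μ : ℕ → ℕ) : ℕ → ℕ := fun i => if i = 1 then μ n + 1 else μ (i - 1)

/-- `π` on boxes: `(i,j) ↦ (i+1,j)` for `i < n`, `(n,j) ↦ (1,j+1)`. -/
def piBox (n : ℕ) (u : ℕ × ℕ) : ℕ × ℕ := if u.1 < n then (u.1 + 1, u.2) else (1, u.2 + 1)

/-- `π` on values: `k ↦ k+1` for `k < n`, `n ↦ 1`. -/
def piVal (n k : ℕ) : ℕ := if k < n then k + 1 else 1


lemma mem_augF {n : ℕ} {μ : ℕ → ℕ} {v : ℕ × ℕ} : v ∈ augF n μ ↔ augIn n μ v := by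
  simp only [augF, Finset.mem_biUnion, Finset.mem_image, Finset.mem_Icc, augIn]
  constructor
  · rintro ⟨i, hi, j, hj, rfl⟩; exact ⟨hi.1, hi.2, hj.2⟩
  · rintro ⟨a1, a2, a3⟩; exact ⟨v.1, ⟨a1, a2⟩, v.2, ⟨Nat.zero_le _, a3⟩, rfl⟩

lemma armIn_augIn {n : ℕ} {μ : ℕ → ℕ} {u v : ℕ × ℕ} (h : armIn n μ u v) :
    augIn n μ v := by
  rcases h with ⟨⟨a1, a2, a3, a4⟩, _⟩ | ⟨h, _⟩
  · exact ⟨a1, a2, a4⟩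
  · exact h

lemma mem_armF {n : ℕ} {μ : ℕ → ℕ} {u v : ℕ × ℕ} :
    v ∈ armF n μ u ↔ armIn n μ u v := by
  simp only [armF, Finset.mem_filter, mem_augF]
  exact ⟨fun h => h.2, fun h => ⟨armIn_augIn h, h⟩⟩

lemma arm_image (n : ℕ) (μ : ℕ → ℕ) (hn : 1 ≤ n) (u : ℕ × ℕ) (hu : dgIn n μ u) :
    armF n (piComp n μ) (piBox n u) = (armF n μ u).image (piBox n) := by
  obtain ⟨i, j⟩ := u
  obtain ⟨h1, h2, h3, h4⟩ := hu
  simp only at h1 h2 h3 h4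
  ext w
  obtain ⟨c, d⟩ := w
  simp only [Finset.mem_image, mem_armF]
  by_cases hun : i < n
  · rw [show piBox n (i, j) = (i + 1, j) from if_pos hun]
    constructor
    · intro hw
      by_cases hw1 : c = 1
      · subst hw1
        refine ⟨(n, d - 1), ?_, ?_⟩
        · simp only [armIn, dgIn, augIn, piComp, Nat.add_sub_cancel] at hw ⊢
          split_ifs at hw ⊢ <;> omega
        · have hd : 1 ≤ d := by
            simp only [armIn, dgIn, augIn, piComp, Nat.add_sub_cancel] at hw
            split_ifs at hw <;> omega
          rw [show piBox n (n, d - 1) = (1, d - 1 + 1) from if_neg (lt_irrefl n)]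
          simp only [Prod.mk.injEq, true_and, and_true]
          omega
      · refine ⟨(c - 1, d), ?_, ?_⟩
        · simp only [armIn, dgIn, augIn, piComp, Nat.add_sub_cancel] at hw ⊢
          split_ifs at hw ⊢ <;> omega
        · have hc : 2 ≤ c ∧ c ≤ n := by
            simp only [armIn, dgIn, augIn, piComp, Nat.add_sub_cancel] at hw
            split_ifs at hw <;> omega
          rw [show piBox n (c - 1, d) = (c - 1 + 1, d) from if_pos (by omega)]
          simp only [Prod.mk.injEq, true_and, and_true]
          omega
    · rintro ⟨v, hv, hpv⟩
      obtain ⟨a, b⟩ := v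
      have hv1 : 1 ≤ a ∧ a ≤ n := ⟨(armIn_augIn hv).1, (armIn_augIn hv).2.1⟩
      by_cases hvn : a < n
      · rw [show piBox n (a, b) = (a + 1, b) from if_pos hvn] at hpv
        rw [Prod.mk.injEq] at hpv
        obtain ⟨rfl, rfl⟩ := hpv
        simp only [armIn, dgIn, augIn, piComp, Nat.add_sub_cancel] at hv ⊢
        split_ifs <;> omega
      · have ha : a = n := by omega
        subst ha
        rw [show piBox a (a, b) = (1, b + 1) from if_neg hvn] at hpv
        rw [Prod.mk.injEq] at hpv
        obtain ⟨rfl, rfl⟩ := hpv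
        simp only [armIn, dgIn, augIn, piComp, Nat.add_sub_cancel] at hv ⊢
        split_ifs <;> omega
  · have hi : i = n := by omega
    subst hi
    rw [show piBox i (i, j) = (1, j + 1) from if_neg hun]
    constructor
    · intro hw
      have hc : 2 ≤ c ∧ c ≤ i := by
        simp only [armIn, dgIn, augIn, piComp, Nat.add_sub_cancel] at hw
        split_ifs at hw <;> omega
      refine ⟨(c - 1, d), ?_, ?_⟩
      · simp only [armIn, dgIn, augIn, piComp, Nat.add_sub_cancel] at hw ⊢
        split_ifs at hw ⊢ <;> omega
      · rw [show piBox i (c - 1, d) = (c - 1 + 1, d) from if_pos (by omega)]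
        simp only [Prod.mk.injEq, true_and, and_true]
        omega
    · rintro ⟨v, hv, hpv⟩
      obtain ⟨a, b⟩ := v
      have hv1 : 1 ≤ a ∧ a ≤ i := ⟨(armIn_augIn hv).1, (armIn_augIn hv).2.1⟩
      by_cases hvn : a < i
      · rw [show piBox i (a, b) = (a + 1, b) from if_pos hvn] at hpv
        rw [Prod.mk.injEq] at hpv
        obtain ⟨rfl, rfl⟩ := hpv
        simp only [armIn, dgIn, augIn, piComp, Nat.add_sub_cancel] at hv ⊢
        split_ifs <;> omega
      · have ha : a = i := by omega
        subst ha
        rw [show piBox a (a, b) = (1, b + 1) from if_neg hvn] at hpv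
        rw [Prod.mk.injEq] at hpv
        obtain ⟨rfl, rfl⟩ := hpv
        simp only [armIn, dgIn, augIn, piComp, Nat.add_sub_cancel] at hv ⊢
        split_ifs <;> omega

lemma piBox_inj {n : ℕ} {v w : ℕ × ℕ} (hv : 1 ≤ v.1 ∧ v.1 ≤ n) (hw : 1 ≤ w.1 ∧ w.1 ≤ n)
    (h : piBox n v = piBox n w) : v = w := by
  obtain ⟨a, b⟩ := v
  obtain ⟨c, d⟩ := w
  simp only at hv hw
  simp only [piBox] at h
  split_ifs at h <;> simp only [Prod.mk.injEq] at h ⊢ <;> omega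

/-- the cyclic shift preserves leg and arm lengths:
`l(π(u)) = l(u)` and `a(π(u)) = a(u)`. -/
theorem piBox_leg_arm (n : ℕ) (μ : ℕ → ℕ) (hn : 1 ≤ n) (u : ℕ × ℕ)
    (hu : dgIn n μ u) :
    legLen (piComp n μ) (piBox n u) = legLen μ u ∧
    armLen n (piComp n μ) (piBox n u) = armLen n μ u := by
  obtain ⟨h1, h2, h3, h4⟩ := hu
  constructor
  · by_cases hun : u.1 < n
    · rw [show piBox n u = (u.1 + 1, u.2) from if_pos hun]
      simp only [legLen, piComp, Nat.add_sub_cancel]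
      split_ifs <;> omega
    · have hi : u.1 = n := by omega
      rw [show piBox n u = (1, u.2 + 1) from if_neg hun]
      simp only [legLen, piComp, hi]
      split_ifs <;> omega
  · unfold armLen
    rw [arm_image n μ hn u ⟨h1, h2, h3, h4⟩]
    rw [Finset.card_image_of_injOn]
    intro v hv w hw hvw
    have av := armIn_augIn (mem_armF.1 hv)
    have aw := armIn_augIn (mem_armF.1 hw)
    exact piBox_inj ⟨av.1, av.2.1⟩ ⟨aw.1, aw.2.1⟩ hvw
end
end
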